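/- arXiv:1612.03510 — 3 statements merged into one kernel-verified Lean document; each statement's English description precedes it below -/
import Mathlib

section
/- Let N ≥ 3 and n ∈ ℕ, and set β_n = (2n+N)(2n+N−2)/(N(N−2)). The radial function W_n(x) = (1 + |x|²)^{−(N−2)/2} · P_n^{((N−2)/2, (N−2)/2)}( (1 − |x|²)/(1 + |x|²) ) satisfies −ΔW_n(x) = β_n · U(x)^{4/(N−2)} · W_n(x) for every x ∈ ℝ^N. -/
open scoped BigOperators

/-- Second directional derivative of `f` at `x` in direction `v`. -/
noncomputable def secondDeriv {E : Type*} [NormedAddCommGroup E] [NormedSpace ℝ E]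
    (f : E → ℝ) (v : E) (x : E) : ℝ :=
  fderiv ℝ (fun y => fderiv ℝ f y v) x v

/-- The Laplacian (sum of second partial derivatives) on `ℝ^N`. -/
noncomputable def laplacian {N : ℕ} (f : EuclideanSpace ℝ (Fin N) → ℝ)
    (x : EuclideanSpace ℝ (Fin N)) : ℝ :=
  ∑ i : Fin N, secondDeriv f (EuclideanSpace.single i 1) x

/-- The standard bubble `U(x) = (N(N-2))^((N-2)/4) (1+|x|^2)^(-(N-2)/2)`. -/
noncomputable def U (N : ℕ) (x : EuclideanSpace ℝ (Fin N)) : ℝ :=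
  ((N : ℝ) * ((N : ℝ) - 2)) ^ (((N : ℝ) - 2) / 4) * (1 + ‖x‖ ^ 2) ^ (-(((N : ℝ) - 2) / 2))

/-- Generalized binomial coefficient `C(a, k) = a(a-1)⋯(a-k+1)/k!`. -/
noncomputable def genBinom (a : ℝ) (k : ℕ) : ℝ :=
  (∏ i ∈ Finset.range k, (a - i)) / (Nat.factorial k)

/-- The Jacobi polynomial `P_m^{(b,c)}`. -/
noncomputable def jacobiP (m : ℕ) (b c : ℝ) (x : ℝ) : ℝ :=
  ∑ s ∈ Finset.range (m + 1),
    genBinom ((m : ℝ) + b) s * genBinom ((m : ℝ) + c) (m - s) *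
      ((x - 1) / 2) ^ (m - s) * ((x + 1) / 2) ^ s

/-- The radial function `W_n`. -/
noncomputable def Wn (N n : ℕ) (x : EuclideanSpace ℝ (Fin N)) : ℝ :=
  (1 + ‖x‖ ^ 2) ^ (-(((N : ℝ) - 2) / 2)) *
    jacobiP n (((N : ℝ) - 2) / 2) (((N : ℝ) - 2) / 2) ((1 - ‖x‖ ^ 2) / (1 + ‖x‖ ^ 2))

noncomputable def aCoef (n : ℕ) (α : ℝ) (k : ℕ) : ℝ :=
  (-1)^k * genBinom ((n:ℝ)+α) k * genBinom ((n:ℝ)+α) (n-k)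

noncomputable def qP (n : ℕ) (α : ℝ) (t : ℝ) : ℝ :=
  ∑ k ∈ Finset.range (n+1), aCoef n α k * t^k
noncomputable def qP1 (n : ℕ) (α : ℝ) (t : ℝ) : ℝ :=
  ∑ k ∈ Finset.range (n+1), aCoef n α k * (k * t^(k-1))
noncomputable def qP2 (n : ℕ) (α : ℝ) (t : ℝ) : ℝ :=
  ∑ k ∈ Finset.range (n+1), aCoef n α k * (k * ((k-1) * t^(k-1-1)))

lemma genBinom_succ (a : ℝ) (m : ℕ) :
    genBinom a (m+1) = genBinom a m * (a - m) / (m+1) := by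
  simp only [genBinom, Finset.prod_range_succ, Nat.factorial_succ]
  push_cast
  rw [div_mul_eq_mul_div, div_div]
  rw [mul_comm ((m:ℝ)+1)]

lemma aCoef_rec (n : ℕ) (α : ℝ) (k : ℕ) (hk : k < n) :
    ((k:ℝ)+1) * ((k:ℝ)+α+1) * aCoef n α (k+1)
      + ((n:ℝ)-k) * ((n:ℝ)-k+α) * aCoef n α k = 0 := by
  have h1 : n - k = (n - (k+1)) + 1 := by omega
  have h2 : ((n - (k+1) : ℕ) : ℝ) = (n:ℝ) - (k:ℝ) - 1 := by
    push_cast [Nat.cast_sub (by omega : k+1 ≤ n)]; ring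
  rw [aCoef, aCoef, genBinom_succ, h1, genBinom_succ, h2]
  have hk1 : ((k:ℝ)+1) ≠ 0 := by positivity
  have hnk : ((n:ℝ)-(k:ℝ)) ≠ 0 := by
    have : (k:ℝ) < n := by exact_mod_cast hk
    intro h; nlinarith
  have : ((n:ℝ) - ((k:ℝ)-1) - 1) = (n:ℝ) - k := by ring
  rw [show (n:ℝ) - k - 1 + 1 = n - k by ring]
  field_simp
  ring

lemma term_eq (n : ℕ) (α : ℝ) (t : ℝ) (k : ℕ) :
    t*(1+t) * ((k:ℝ) * (((k:ℝ)-1) * t^(k-1-1)))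
      + ((α+1)*(1+t) - 2*(α+(n:ℝ))*t) * ((k:ℝ) * t^(k-1))
      + (n:ℝ)*(α+(n:ℝ)) * t^k
    = (k:ℝ)*((k:ℝ)+α) * t^(k-1) + ((n:ℝ)-(k:ℝ))*((n:ℝ)-(k:ℝ)+α) * t^k := by
  match k with
  | 0 => norm_num; left; ring
  | 1 => norm_num; ring
  | (m+2) =>
    have e1 : (m+2) - 1 = m + 1 := rfl
    have e2 : (m+1) - 1 = m := rfl
    rw [e1, e2]
    push_cast
    ring

lemma key_ode (n : ℕ) (α : ℝ) (t : ℝ) :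
    t*(1+t) * qP2 n α t + ((α+1)*(1+t) - 2*(α+(n:ℝ))*t) * qP1 n α t
      + (n:ℝ)*(α+(n:ℝ)) * qP n α t = 0 := by
  unfold qP qP1 qP2
  rw [Finset.mul_sum, Finset.mul_sum, Finset.mul_sum]
  rw [← Finset.sum_add_distrib, ← Finset.sum_add_distrib]
  have h1 : ∀ k ∈ Finset.range (n+1),
      t*(1+t) * (aCoef n α k * ((k:ℝ) * (((k:ℝ)-1) * t^(k-1-1))))
        + ((α+1)*(1+t) - 2*(α+(n:ℝ))*t) * (aCoef n α k * ((k:ℝ) * t^(k-1)))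
        + (n:ℝ)*(α+(n:ℝ)) * (aCoef n α k * t^k)
      = aCoef n α k * ((k:ℝ)*((k:ℝ)+α) * t^(k-1))
        + aCoef n α k * (((n:ℝ)-(k:ℝ))*((n:ℝ)-(k:ℝ)+α) * t^k) := by
    intro k _
    have h := term_eq n α t k
    linear_combination aCoef n α k * h
  rw [Finset.sum_congr rfl h1, Finset.sum_add_distrib]
  have h2 : ∑ k ∈ Finset.range (n+1), aCoef n α k * ((k:ℝ)*((k:ℝ)+α) * t^(k-1))
      = ∑ k ∈ Finset.range n, aCoef n α (k+1) * (((k:ℝ)+1)*((k:ℝ)+1+α) * t^k) := by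
    rw [Finset.sum_range_succ']
    simp
  have h3 : ∑ k ∈ Finset.range (n+1), aCoef n α k * (((n:ℝ)-(k:ℝ))*((n:ℝ)-(k:ℝ)+α) * t^k)
      = ∑ k ∈ Finset.range n, aCoef n α k * (((n:ℝ)-(k:ℝ))*((n:ℝ)-(k:ℝ)+α) * t^k) := by
    rw [Finset.sum_range_succ]
    simp
  rw [h2, h3, ← Finset.sum_add_distrib]
  apply Finset.sum_eq_zero
  intro k hk
  have hrec := aCoef_rec n α k (Finset.mem_range.mp hk)
  linear_combination t^k * hrec

lemma hasDerivAt_qP (n : ℕ) (α : ℝ) (t : ℝ) : HasDerivAt (qP n α) (qP1 n α t) t := by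
  unfold qP qP1
  apply HasDerivAt.fun_sum
  intro k _
  simpa using (hasDerivAt_pow k t).const_mul (aCoef n α k)

lemma hasDerivAt_qP1 (n : ℕ) (α : ℝ) (t : ℝ) : HasDerivAt (qP1 n α) (qP2 n α t) t := by
  unfold qP1 qP2
  apply HasDerivAt.fun_sum
  intro k _
  match k with
  | 0 => simpa using hasDerivAt_const t (0:ℝ)
  | (m+1) =>
    have h := ((hasDerivAt_pow m t).const_mul ((m:ℝ)+1)).const_mul (aCoef n α (m+1))
    convert h using 1
    · rfl
    · funext s; push_cast [Nat.add_sub_cancel]; ring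
    · push_cast [Nat.add_sub_cancel]; ring

noncomputable def Gf (n : ℕ) (α : ℝ) (t : ℝ) : ℝ := (1+t) ^ (-(α+(n:ℝ))) * qP n α t
noncomputable def Gf1 (n : ℕ) (α : ℝ) (t : ℝ) : ℝ :=
  (-(α+(n:ℝ))) * (1+t) ^ (-(α+(n:ℝ))-1) * qP n α t + (1+t) ^ (-(α+(n:ℝ))) * qP1 n α t
noncomputable def Gf2 (n : ℕ) (α : ℝ) (t : ℝ) : ℝ :=
  (-(α+(n:ℝ))) * ((-(α+(n:ℝ)))-1) * (1+t) ^ (-(α+(n:ℝ))-2) * qP n α t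
  + 2 * (-(α+(n:ℝ))) * (1+t) ^ (-(α+(n:ℝ))-1) * qP1 n α t
  + (1+t) ^ (-(α+(n:ℝ))) * qP2 n α t

lemma hasDerivAt_rpow1 (p t : ℝ) (ht : 0 < 1+t) :
    HasDerivAt (fun s => (1+s) ^ p) (p * (1+t)^(p-1)) t := by
  have h := (Real.hasDerivAt_rpow_const (p := p) (Or.inl (ne_of_gt ht))).comp t
    ((hasDerivAt_id t).const_add 1)
  simpa [Function.comp_def] using h

lemma hasDerivAt_Gf (n : ℕ) (α : ℝ) (t : ℝ) (ht : 0 < 1+t) :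
    HasDerivAt (Gf n α) (Gf1 n α t) t := by
  have h := (hasDerivAt_rpow1 (-(α+(n:ℝ))) t ht).mul (hasDerivAt_qP n α t)
  exact h

lemma hasDerivAt_Gf1 (n : ℕ) (α : ℝ) (t : ℝ) (ht : 0 < 1+t) :
    HasDerivAt (Gf1 n α) (Gf2 n α t) t := by
  have h1 := ((hasDerivAt_rpow1 (-(α+(n:ℝ))-1) t ht).mul (hasDerivAt_qP n α t)).const_mul
    (-(α+(n:ℝ)))
  have h2 := (hasDerivAt_rpow1 (-(α+(n:ℝ))) t ht).mul (hasDerivAt_qP1 n α t)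
  have h := h1.add h2
  have e : -(α+(n:ℝ)) - 1 - 1 = -(α+(n:ℝ)) - 2 := by ring
  convert h using 1
  · rfl
  · rfl
  · funext s; unfold Gf1; simp only [Pi.add_apply, Pi.mul_apply]; ring
  · unfold Gf2; rw [← e]; ring

lemma radial_ode (n : ℕ) (α : ℝ) (t : ℝ) (ht : 0 < 1+t) :
    4*t*Gf2 n α t + (2*(2*α+2))*Gf1 n α t
      + 4*((n:ℝ)+α)*((n:ℝ)+α+1)*(1+t)^(-(2:ℝ))*Gf n α t = 0 := by
  set p : ℝ := -(α+(n:ℝ)) with hp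
  have ht' : (1+t) ≠ 0 := ne_of_gt ht
  have hA0 : (1+t) ^ (p-1) = (1+t)^(p-2) * (1+t) := by
    rw [← Real.rpow_add_one ht']; ring_nf
  have hA1 : (1+t) ^ p = (1+t)^(p-2) * (1+t)^(2:ℕ) := by
    rw [← Real.rpow_natCast (1+t) 2, ← Real.rpow_add ht]; ring_nf
  have hB2 : (1+t)^(-(2:ℝ)) = ((1+t)^(2:ℕ))⁻¹ := by
    rw [← Real.rpow_natCast (1+t) 2, ← Real.rpow_neg (le_of_lt ht)]; norm_num
  have hk := key_ode n α t
  unfold Gf Gf1 Gf2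
  rw [← hp, hA0, hA1, hB2]
  have h2 : ((1+t)^(2:ℕ)) ≠ 0 := pow_ne_zero 2 ht'
  field_simp
  linear_combination (4*(1+t)*(1+t)^(p-2)) * hk + (1+t)^(p-2) * (qP n α t * (4*t*(p-(α+(n:ℝ))) - 4*t + 4*(1+t)*(α+1)) + qP1 n α t * (8*t*(1+t))) * hp

open scoped RealInnerProductSpace

variable {N : ℕ}

lemma hasFDerivAt_GfNorm (n : ℕ) (α : ℝ) (y : EuclideanSpace ℝ (Fin N)) :
    HasFDerivAt (fun z : EuclideanSpace ℝ (Fin N) => Gf n α (‖z‖^2))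
      ((Gf1 n α (‖y‖^2)) • (2 • innerSL ℝ y)) y := by
  have hpos : (0:ℝ) < 1 + ‖y‖^2 := by positivity
  exact (hasDerivAt_Gf n α (‖y‖^2) hpos).comp_hasFDerivAt y
    (hasStrictFDerivAt_norm_sq y).hasFDerivAt

lemma fderiv_GfNorm (n : ℕ) (α : ℝ) (y : EuclideanSpace ℝ (Fin N))
    (v : EuclideanSpace ℝ (Fin N)) :
    fderiv ℝ (fun z : EuclideanSpace ℝ (Fin N) => Gf n α (‖z‖^2)) y v
      = Gf1 n α (‖y‖^2) * (2 * ⟪y, v⟫) := by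
  rw [(hasFDerivAt_GfNorm n α y).fderiv]
  simp [smul_eq_mul]

lemma secondDeriv_GfNorm (n : ℕ) (α : ℝ) (x : EuclideanSpace ℝ (Fin N))
    (v : EuclideanSpace ℝ (Fin N)) :
    secondDeriv (fun z : EuclideanSpace ℝ (Fin N) => Gf n α (‖z‖^2)) v x
      = Gf2 n α (‖x‖^2) * (2*⟪x,v⟫) * (2*⟪x,v⟫) + Gf1 n α (‖x‖^2) * (2*⟪v,v⟫) := by
  unfold secondDeriv
  have hrw : (fun y : EuclideanSpace ℝ (Fin N) => fderiv ℝ (fun z => Gf n α (‖z‖^2)) y v)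
      = fun y => Gf1 n α (‖y‖^2) * (2 * ⟪y, v⟫) := by
    funext y; exact fderiv_GfNorm n α y v
  rw [hrw]
  have hpos : (0:ℝ) < 1 + ‖x‖^2 := by positivity
  have hc : HasFDerivAt (fun y : EuclideanSpace ℝ (Fin N) => Gf1 n α (‖y‖^2))
      ((Gf2 n α (‖x‖^2)) • (2 • innerSL ℝ x)) x := by
    exact (hasDerivAt_Gf1 n α (‖x‖^2) hpos).comp_hasFDerivAt x
      (hasStrictFDerivAt_norm_sq x).hasFDerivAt
  have hd : HasFDerivAt (fun y : EuclideanSpace ℝ (Fin N) => 2 * ⟪y, v⟫)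
      ((2:ℝ) • (innerSL ℝ v : EuclideanSpace ℝ (Fin N) →L[ℝ] ℝ)) x := by
    have h0 := ((2:ℝ) • (innerSL ℝ v : EuclideanSpace ℝ (Fin N) →L[ℝ] ℝ)).hasFDerivAt (x := x)
    have he : (fun y : EuclideanSpace ℝ (Fin N) => 2 * ⟪y, v⟫) = ⇑((2:ℝ) • (innerSL ℝ v : EuclideanSpace ℝ (Fin N) →L[ℝ] ℝ)) := by
      funext y
      rw [ContinuousLinearMap.smul_apply, innerSL_apply_apply, real_inner_comm, smul_eq_mul]
    rw [he]
    exact h0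
  have hmul := hc.fun_mul' hd
  rw [hmul.fderiv]
  simp [smul_eq_mul, real_inner_comm]
  ring

lemma laplacian_GfNorm (n : ℕ) (α : ℝ) (x : EuclideanSpace ℝ (Fin N)) :
    laplacian (fun z : EuclideanSpace ℝ (Fin N) => Gf n α (‖z‖^2)) x
      = 4 * ‖x‖^2 * Gf2 n α (‖x‖^2) + 2*(N:ℝ) * Gf1 n α (‖x‖^2) := by
  unfold laplacian
  have h : ∀ i : Fin N,
      secondDeriv (fun z : EuclideanSpace ℝ (Fin N) => Gf n α (‖z‖^2))
        (EuclideanSpace.single i 1) x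
      = 4 * Gf2 n α (‖x‖^2) * (x i)^2 + 2 * Gf1 n α (‖x‖^2) := by
    intro i
    rw [secondDeriv_GfNorm]
    have h1 : ⟪x, EuclideanSpace.single i (1:ℝ)⟫ = x i := by
      rw [EuclideanSpace.inner_single_right]; simp
    have h2 : ⟪EuclideanSpace.single i (1:ℝ), EuclideanSpace.single i (1:ℝ)⟫ = (1:ℝ) := by
      rw [EuclideanSpace.inner_single_right]; simp
    rw [h1, h2]; ring
  rw [Finset.sum_congr rfl (fun i _ => h i)]
  rw [Finset.sum_add_distrib]
  have hx : ∑ i : Fin N, (x i)^2 = ‖x‖^2 := by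
    rw [← real_inner_self_eq_norm_sq]
    rw [real_inner_self_eq_norm_sq, EuclideanSpace.real_norm_sq_eq]
  rw [← Finset.mul_sum (Finset.univ) (fun i => (x i)^2) (4 * Gf2 n α (‖x‖ ^ 2)), hx,
    Finset.sum_const, Finset.card_univ, Fintype.card_fin, nsmul_eq_mul]
  ring

lemma Wn_eq_Gf (N n : ℕ) (x : EuclideanSpace ℝ (Fin N)) :
    Wn N n x = Gf n (((N:ℝ)-2)/2) (‖x‖^2) := by
  set α : ℝ := ((N:ℝ)-2)/2 with hα
  set t : ℝ := ‖x‖^2 with htdef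
  have h1 : (0:ℝ) < 1+t := by positivity
  have h1' : (1+t) ≠ 0 := ne_of_gt h1
  unfold Wn jacobiP Gf qP
  rw [← htdef, ← hα]
  rw [← Finset.sum_range_reflect
    (fun s => genBinom ((n:ℝ)+α) s * genBinom ((n:ℝ)+α) (n-s) *
      (((1-t)/(1+t) - 1)/2)^(n-s) * (((1-t)/(1+t) + 1)/2)^s) (n+1)]
  rw [Finset.mul_sum, Finset.mul_sum]
  apply Finset.sum_congr rfl
  intro k hk
  have hkn : k ≤ n := by
    have := Finset.mem_range.mp hk; omega
  have e0 : n + 1 - 1 - k = n - k := by omega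
  have e1 : n - (n-k) = k := by omega
  rw [e0, e1]
  have hxi1 : ((1-t)/(1+t) - 1)/2 = -(t/(1+t)) := by field_simp; ring
  have hxi2 : ((1-t)/(1+t) + 1)/2 = 1/(1+t) := by field_simp; ring
  rw [hxi1, hxi2]
  have hsp : (1+t)^(-(α+(n:ℝ))) = (1+t)^(-α) * ((1+t)^(n:ℕ))⁻¹ := by
    rw [← Real.rpow_natCast (1+t) n, ← Real.rpow_neg h1.le, ← Real.rpow_add h1]
    ring_nf
  rw [hsp, aCoef]
  have hnn : (1+t)^(k:ℕ) * (1+t)^((n-k):ℕ) = (1+t)^(n:ℕ) := by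
    rw [← pow_add]; congr 1; omega
  have hpk : ((1+t):ℝ)^(k:ℕ) ≠ 0 := pow_ne_zero _ h1'
  have hpnk : ((1+t):ℝ)^((n-k):ℕ) ≠ 0 := pow_ne_zero _ h1'
  rw [neg_pow, div_pow, div_pow, one_pow]
  field_simp
  rw [← hnn]
  ring

theorem statement3 (N n : ℕ) (hN : 3 ≤ N) :
    ∀ x : EuclideanSpace ℝ (Fin N),
      -laplacian (Wn N n) x =
        ((2 * (n : ℝ) + N) * (2 * (n : ℝ) + N - 2) / ((N : ℝ) * ((N : ℝ) - 2))) *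
          U N x ^ ((4 : ℝ) / ((N : ℝ) - 2)) * Wn N n x := by
  intro x
  have hN3 : (3:ℝ) ≤ (N:ℝ) := by exact_mod_cast hN
  have hN2 : (N:ℝ) - 2 ≠ 0 := by linarith
  have hNN : (0:ℝ) < (N:ℝ)*((N:ℝ)-2) := by nlinarith
  have ht1 : (0:ℝ) < 1+‖x‖^2 := by positivity
  have hWfun : Wn N n = fun z : EuclideanSpace ℝ (Fin N) => Gf n (((N:ℝ)-2)/2) (‖z‖^2) :=
    funext (Wn_eq_Gf N n)
  rw [hWfun, laplacian_GfNorm]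
  have hU : U N x ^ ((4:ℝ)/((N:ℝ)-2))
      = (N:ℝ)*((N:ℝ)-2) * (1+‖x‖^2)^(-(2:ℝ)) := by
    unfold U
    rw [Real.mul_rpow (Real.rpow_nonneg hNN.le _) (Real.rpow_nonneg ht1.le _),
      ← Real.rpow_mul hNN.le, ← Real.rpow_mul ht1.le]
    have e1 : ((N:ℝ)-2)/4 * ((4:ℝ)/((N:ℝ)-2)) = 1 := by field_simp
    have e2 : (-(((N:ℝ)-2)/2)) * ((4:ℝ)/((N:ℝ)-2)) = -(2:ℝ) := by field_simp; ring
    rw [e1, e2, Real.rpow_one]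
  rw [hU]
  have hrad := radial_ode n (((N:ℝ)-2)/2) (‖x‖^2) ht1
  have hdiv : ((2*(n:ℝ)+N) * (2*(n:ℝ)+N-2) / ((N:ℝ)*((N:ℝ)-2))) *
        ((N:ℝ)*((N:ℝ)-2) * (1+‖x‖^2)^(-(2:ℝ))) * Gf n (((N:ℝ)-2)/2) (‖x‖^2)
      = 4*((n:ℝ)+((N:ℝ)-2)/2)*((n:ℝ)+((N:ℝ)-2)/2+1) * (1+‖x‖^2)^(-(2:ℝ)) *
          Gf n (((N:ℝ)-2)/2) (‖x‖^2) := by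
    field_simp
    ring
  rw [hdiv]
  linear_combination -hrad
end

section
/- Let N ≥ 1 and 1 ≤ m ≤ N, and write points of ℝ^N as x = (x′, x_{N−m+1}, …, x_N) with x′ ∈ ℝ^{N−m}. A polynomial function p : ℝ^N → ℝ satisfies p(g x′, x_{N−m+1}, …, x_N) = p(x′, x_{N−m+1}, …, x_N) for every orthogonal transformation g of ℝ^{N−m}, and changes sign under each of the m reflections x_{N+1−i} ↦ −x_{N+1−i} (i = 1, …, m), if and only if there exists a real polynomial q in m+1 variables such that p(x) = x_{N−m+1} ⋯ x_N · q(|x′|², x_{N−m+1}², …, x_N²) for all x ∈ ℝ^N. -/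
open MvPolynomial

lemma coeff_flip {σ : Type*} [DecidableEq σ] (j : σ) (ψ : MvPolynomial σ ℝ)
    (d : σ →₀ ℕ) :
    coeff d (bind₁ (fun k => if k = j then -X k else X k) ψ)
      = (-1) ^ (d j) * coeff d ψ := by
  have key : ∀ (d' : σ →₀ ℕ) (c : ℝ),
      bind₁ (fun k => if k = j then -X k else (X k : MvPolynomial σ ℝ)) (monomial d' c)
        = monomial d' ((-1 : ℝ) ^ (d' j) * c) := by
    intro d' c
    rw [bind₁_monomial]
    have h1 : ∀ i ∈ d'.support,
        (if i = j then -X i else (X i : MvPolynomial σ ℝ)) ^ d' i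
          = (if i = j then ((-1 : MvPolynomial σ ℝ)) ^ d' i else 1) * X i ^ d' i := by
      intro i _
      split_ifs with h
      · rw [neg_pow]
      · rw [one_mul]
    have h2 : (∏ i ∈ d'.support, if i = j then ((-1 : MvPolynomial σ ℝ)) ^ d' i else 1)
        = (-1 : MvPolynomial σ ℝ) ^ d' j := by
      rw [Finset.prod_ite_eq' d'.support j (fun i => ((-1 : MvPolynomial σ ℝ)) ^ d' i)]
      split_ifs with h
      · rfl
      · rw [Finsupp.notMem_support_iff.mp h, pow_zero]
    rw [Finset.prod_congr rfl h1, Finset.prod_mul_distrib, h2, monomial_eq, map_mul,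
      map_pow, map_neg, map_one, Finsupp.prod]
    ring
  conv_lhs => rw [as_sum ψ]
  rw [map_sum]
  simp_rw [key]
  rw [coeff_sum]
  simp_rw [coeff_monomial]
  rw [Finset.sum_ite_eq' ψ.support d (fun x => (-1 : ℝ) ^ (x j) * coeff x ψ)]
  split_ifs with h
  · rfl
  · rw [MvPolynomial.notMem_support_iff.mp h, mul_zero]

lemma eval_bind {σ τ : Type*} (x : τ → ℝ) (g : σ → MvPolynomial τ ℝ)
    (ψ : MvPolynomial σ ℝ) :
    eval x (bind₁ g ψ) = eval (fun k => eval x (g k)) ψ := by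
  exact eval₂Hom_bind₁ (RingHom.id ℝ) x g ψ

lemma exists_isometry_swap {n : ℕ} (a b : EuclideanSpace ℝ (Fin n)) (h : ‖a‖ = ‖b‖) :
    ∃ g : EuclideanSpace ℝ (Fin n) ≃ₗᵢ[ℝ] EuclideanSpace ℝ (Fin n), g a = b :=
  ⟨Submodule.reflection (ℝ ∙ (a - b))ᗮ, Submodule.reflection_sub h⟩

lemma monomial_step (m : ℕ) (t : ℝ) (y : Fin m → ℝ) (d : Fin (m+1) →₀ ℕ) (c : ℝ)
    (h0 : d 0 % 2 = 0) (hi : ∀ i : Fin m, d i.succ % 2 = 1) :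
    eval (Fin.cons t y) (monomial d c)
      = (∏ i, y i) * eval (Fin.cons (t ^ 2) fun i => (y i) ^ 2)
          (monomial (d.mapRange (· / 2) (Nat.zero_div 2)) c) := by
  rw [eval_monomial, eval_monomial,
    Finsupp.prod_fintype _ _ (fun i => pow_zero _),
    Finsupp.prod_fintype _ _ (fun i => pow_zero _),
    Fin.prod_univ_succ, Fin.prod_univ_succ]
  simp only [Fin.cons_zero, Fin.cons_succ, Finsupp.mapRange_apply]
  have h0' : t ^ (d 0) = (t ^ 2) ^ (d 0 / 2) := by
    rw [← pow_mul]; congr 1; omega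
  have hi' : ∀ i ∈ Finset.univ, y i ^ (d i.succ) = (y i ^ 2) ^ (d i.succ / 2) * y i := by
    intro i _
    rw [← pow_mul, ← pow_succ]
    congr 1
    have := hi i
    omega
  rw [h0', Finset.prod_congr rfl hi', Finset.prod_mul_distrib]
  ring

open scoped BigOperators

theorem statement13 (N m : ℕ) (hN : 1 ≤ N) (hm : 1 ≤ m) (hmN : m ≤ N)
    (p : EuclideanSpace ℝ (Fin (N - m)) × (Fin m → ℝ) → ℝ)
    (hpoly : ∃ P : MvPolynomial (Fin (N - m) ⊕ Fin m) ℝ,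
      ∀ x : EuclideanSpace ℝ (Fin (N - m)) × (Fin m → ℝ),
        p x = MvPolynomial.eval (Sum.elim (fun i => x.1 i) x.2) P) :
    ((∀ g : EuclideanSpace ℝ (Fin (N - m)) ≃ₗᵢ[ℝ] EuclideanSpace ℝ (Fin (N - m)),
        ∀ x' y, p (g x', y) = p (x', y)) ∧
      (∀ i : Fin m, ∀ x' y, p (x', Function.update y i (-(y i))) = -p (x', y))) ↔
    ∃ q : MvPolynomial (Fin (m + 1)) ℝ,
      ∀ x' y, p (x', y) =
        (∏ i, y i) * MvPolynomial.eval (Fin.cons (‖x'‖ ^ 2) fun i => (y i) ^ 2) q := by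
  classical
  constructor
  · rintro ⟨h1, h2⟩
    obtain ⟨v, hv⟩ : ∃ v : EuclideanSpace ℝ (Fin (N - m)),
        ∀ x' : EuclideanSpace ℝ (Fin (N - m)), ‖(‖x'‖ : ℝ) • v‖ = ‖x'‖ := by
      by_cases hn : N - m = 0
      · refine ⟨0, fun x' => ?_⟩
        have hx : x' = 0 := PiLp.ext fun i => absurd i.2 (by omega)
        subst hx
        simp
      · refine ⟨EuclideanSpace.single ⟨0, Nat.pos_of_ne_zero hn⟩ 1, fun x' => ?_⟩
        rw [norm_smul, EuclideanSpace.norm_single, norm_one, mul_one,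
          Real.norm_eq_abs, abs_norm]
    have hswap : ∀ a b : EuclideanSpace ℝ (Fin (N - m)), ‖a‖ = ‖b‖ →
        ∀ y, p (a, y) = p (b, y) := by
      intro a b hab y
      obtain ⟨g, hg⟩ := exists_isometry_swap a b hab
      have := h1 g a y
      rw [hg] at this
      exact this.symm
    obtain ⟨P, hP⟩ := hpoly
    set ψ : MvPolynomial (Fin (m + 1)) ℝ :=
      bind₁ (Sum.elim (fun i => C (v i) * X 0) (fun j => X j.succ)) P with hψdef
    have hψ : ∀ (t : ℝ) (y : Fin m → ℝ), eval (Fin.cons t y) ψ = p (t • v, y) := by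
      intro t y
      rw [hψdef, eval_bind, hP]
      have harg : (fun k => eval (Fin.cons t y)
            (Sum.elim (fun i => C (v i) * X 0) (fun j => X j.succ) k))
          = (Sum.elim (fun i => ((t • v, y) :
              EuclideanSpace ℝ (Fin (N - m)) × (Fin m → ℝ)).1 i) (t • v, y).2) := by
        funext s
        cases s with
        | inl i => simp [PiLp.smul_apply, mul_comm]
        | inr j => simp
      rw [harg]
    have hflip0 : bind₁ (fun k => if k = (0 : Fin (m + 1)) then -X k else X k) ψ = ψ := by
      apply MvPolynomial.funext
      intro x
      rw [eval_bind]
      have hx : (fun k => eval x (if k = (0 : Fin (m + 1)) then -X k else X k))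
          = Fin.cons (-(x 0)) (Fin.tail x) := by
        funext k
        refine Fin.cases ?_ ?_ k
        · simp
        · intro i
          simp [Fin.tail, Fin.succ_ne_zero]
      rw [hx, hψ]
      conv_rhs => rw [← Fin.cons_self_tail x]
      rw [hψ]
      exact hswap _ _ (by rw [neg_smul, norm_neg]) _
    have hflipi : ∀ i : Fin m,
        bind₁ (fun k => if k = i.succ then -X k else X k) ψ = -ψ := by
      intro i
      apply MvPolynomial.funext
      intro x
      rw [eval_bind, map_neg]
      have hx : (fun k => eval x (if k = i.succ then -X k else X k))
          = Fin.cons (x 0) (Function.update (Fin.tail x) i (-(Fin.tail x i))) := by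
        funext k
        refine Fin.cases ?_ ?_ k
        · simp [(Fin.succ_ne_zero i).symm]
        · intro j
          by_cases hji : j = i
          · subst hji; simp [Fin.tail]
          · simp [Fin.tail, Function.update_of_ne hji, Fin.succ_inj.ne.mpr hji]
      rw [hx, hψ, h2, ← hψ, Fin.cons_self_tail]
    have hpar : ∀ d ∈ ψ.support, d 0 % 2 = 0 ∧ ∀ i : Fin m, d i.succ % 2 = 1 := by
      intro d hd
      have hc : coeff d ψ ≠ 0 := MvPolynomial.mem_support_iff.mp hd
      constructor
      · by_contra hodd
        have h := coeff_flip (0 : Fin (m + 1)) ψ d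
        rw [hflip0] at h
        have hpw : (-1 : ℝ) ^ (d 0) = -1 := Odd.neg_one_pow (Nat.odd_iff.mpr (by omega))
        rw [hpw] at h
        apply hc; linarith
      · intro i
        by_contra hev
        have h := coeff_flip i.succ ψ d
        rw [hflipi i] at h
        have hpw : (-1 : ℝ) ^ (d i.succ) = 1 := Even.neg_one_pow (Nat.even_iff.mpr (by omega))
        rw [hpw, one_mul, MvPolynomial.coeff_neg] at h
        apply hc; linarith
    refine ⟨∑ d ∈ ψ.support, monomial (d.mapRange (· / 2) (Nat.zero_div 2)) (coeff d ψ), ?_⟩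
    intro x' y
    have hkey : ∀ t : ℝ, eval (Fin.cons t y) ψ
        = (∏ i, y i) * eval (Fin.cons (t ^ 2) fun i => (y i) ^ 2)
            (∑ d ∈ ψ.support, monomial (d.mapRange (· / 2) (Nat.zero_div 2)) (coeff d ψ)) := by
      intro t
      conv_lhs => rw [as_sum ψ]
      rw [map_sum, map_sum, Finset.mul_sum]
      apply Finset.sum_congr rfl
      intro d hd
      exact monomial_step m t y d (coeff d ψ) (hpar d hd).1 (hpar d hd).2
    have h3 : p (x', y) = p (‖x'‖ • v, y) := hswap _ _ (hv x').symm y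
    rw [h3, ← hψ, hkey]
  · rintro ⟨q, hq⟩
    constructor
    · intro g x' y
      rw [hq, hq, g.norm_map]
    · intro i x' y
      rw [hq, hq]
      have hprod : (∏ j, Function.update y i (-(y i)) j) = -∏ j, y j := by
        rw [Finset.prod_update_of_mem (Finset.mem_univ i),
          Finset.sdiff_singleton_eq_erase, neg_mul,
          Finset.mul_prod_erase _ _ (Finset.mem_univ i)]
      have harg : (fun j => (Function.update y i (-(y i)) j) ^ 2)
          = fun j => (y j) ^ 2 := by
        funext j
        rcases eq_or_ne j i with h | h
        · subst h; simp
        · rw [Function.update_of_ne h]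
      rw [harg, hprod]
      ring
end

section
/- Let N ≥ 2 and k ∈ ℕ. The real vector space of harmonic polynomial functions on ℝ^N that are homogeneous of degree k and invariant under every orthogonal transformation of ℝ^{N−1} acting on the first N−1 coordinates (i.e. p(g x′, x_N) = p(x′, x_N) for all g ∈ O(N−1)) has dimension exactly 1. -/
open scoped BigOperators

/-- The Laplacian (sum of second partial derivatives) on `ℝ^k × ℝ`. -/
noncomputable def laplacianProd (k : ℕ)
    (f : EuclideanSpace ℝ (Fin k) × ℝ → ℝ) (x : EuclideanSpace ℝ (Fin k) × ℝ) : ℝ :=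
  (∑ i : Fin k, secondDeriv f (EuclideanSpace.single i 1, 0) x) +
    secondDeriv f ((0 : EuclideanSpace ℝ (Fin k)), 1) x

/-- `p` is a polynomial function on `ℝ^k × ℝ`. -/
def IsPolyFun (k : ℕ) (p : EuclideanSpace ℝ (Fin k) × ℝ → ℝ) : Prop :=
  ∃ P : MvPolynomial (Fin k ⊕ Fin 1) ℝ,
    ∀ x : EuclideanSpace ℝ (Fin k) × ℝ,
      p x = MvPolynomial.eval (Sum.elim (fun i => x.1 i) (fun _ => x.2)) P

/-- `p` is (positively) homogeneous of degree `d`. -/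
def IsHomOfDeg (k d : ℕ) (p : EuclideanSpace ℝ (Fin k) × ℝ → ℝ) : Prop :=
  ∀ c : ℝ, 0 < c → ∀ x, p (c • x) = c ^ d * p x

/-- `p` is harmonic, i.e. its Laplacian vanishes identically. -/
def IsHarm (k : ℕ) (p : EuclideanSpace ℝ (Fin k) × ℝ → ℝ) : Prop :=
  ∀ x, laplacianProd k p x = 0

/-- `p` is invariant under every orthogonal transformation of the first factor. -/
def IsOInvariant (k : ℕ) (p : EuclideanSpace ℝ (Fin k) × ℝ → ℝ) : Prop :=
  ∀ g : EuclideanSpace ℝ (Fin k) ≃ₗᵢ[ℝ] EuclideanSpace ℝ (Fin k),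
    ∀ x' t, p (g x', t) = p (x', t)

/-- The continuous linear coordinate map `ℝ^k × ℝ → (Fin k ⊕ Fin 1 → ℝ)`. -/
noncomputable def coordCLM (k : ℕ) :
    (EuclideanSpace ℝ (Fin k) × ℝ) →L[ℝ] (Fin k ⊕ Fin 1 → ℝ) :=
  ContinuousLinearMap.pi fun j =>
    Sum.elim
      (fun i => (EuclideanSpace.proj i).comp
        (ContinuousLinearMap.fst ℝ (EuclideanSpace ℝ (Fin k)) ℝ))
      (fun _ => ContinuousLinearMap.snd ℝ (EuclideanSpace ℝ (Fin k)) ℝ) j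

lemma coordCLM_apply (k : ℕ) (x : EuclideanSpace ℝ (Fin k) × ℝ) :
    coordCLM k x = Sum.elim (fun i => x.1 i) (fun _ => x.2) := by
  funext j; cases j <;> rfl

lemma IsPolyFun.contDiff2 {k : ℕ} {p : EuclideanSpace ℝ (Fin k) × ℝ → ℝ}
    (hp : IsPolyFun k p) : ContDiff ℝ 2 p := by
  obtain ⟨P, hP⟩ := hp
  have hfun : p = fun x => MvPolynomial.eval (coordCLM k x) P := by
    funext x; rw [hP x, coordCLM_apply]
  rw [hfun]
  exact (AnalyticOnNhd.eval_continuousLinearMap (coordCLM k) P).contDiff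

lemma secondDeriv_add {E : Type*} [NormedAddCommGroup E] [NormedSpace ℝ E]
    {p q : E → ℝ} (hp : ContDiff ℝ 2 p) (hq : ContDiff ℝ 2 q) (v x : E) :
    secondDeriv (p + q) v x = secondDeriv p v x + secondDeriv q v x := by
  have hp1 : Differentiable ℝ p := hp.differentiable (by norm_num)
  have hq1 : Differentiable ℝ q := hq.differentiable (by norm_num)
  have hpf : Differentiable ℝ (fun y => fderiv ℝ p y v) := fun y =>
    (((hp.fderiv_right (m := 1) (by norm_num)).differentiable (by norm_num)) y).clm_apply
      (differentiableAt_const v)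
  have hqf : Differentiable ℝ (fun y => fderiv ℝ q y v) := fun y =>
    (((hq.fderiv_right (m := 1) (by norm_num)).differentiable (by norm_num)) y).clm_apply
      (differentiableAt_const v)
  have e1 : (fun y => fderiv ℝ (p + q) y v) =
      fun y => fderiv ℝ p y v + fderiv ℝ q y v := by
    funext y
    have h : (p + q) = fun z => p z + q z := rfl
    rw [h, fderiv_fun_add (hp1 y) (hq1 y)]
    rfl
  unfold secondDeriv
  rw [e1, fderiv_fun_add (hpf x) (hqf x)]
  rfl

lemma secondDeriv_smul {E : Type*} [NormedAddCommGroup E] [NormedSpace ℝ E]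
    {p : E → ℝ} (hp : ContDiff ℝ 2 p) (a : ℝ) (v x : E) :
    secondDeriv (a • p) v x = a * secondDeriv p v x := by
  have hp1 : Differentiable ℝ p := hp.differentiable (by norm_num)
  have hpf : Differentiable ℝ (fun y => fderiv ℝ p y v) := fun y =>
    (((hp.fderiv_right (m := 1) (by norm_num)).differentiable (by norm_num)) y).clm_apply
      (differentiableAt_const v)
  have e1 : (fun y => fderiv ℝ (a • p) y v) = fun y => a * fderiv ℝ p y v := by
    funext y
    have h : (a • p) = fun z => a * p z := by
      funext z; simp [Pi.smul_apply, smul_eq_mul]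
    rw [h, fderiv_const_mul (hp1 y) a]
    simp
  unfold secondDeriv
  rw [e1, fderiv_const_mul (hpf x) a]
  simp

/-- The space of `O(k)`-invariant harmonic polynomial functions on `ℝ^k × ℝ`,
homogeneous of degree `d`. -/
noncomputable def zonalSpace (k d : ℕ) :
    Submodule ℝ ((EuclideanSpace ℝ (Fin k) × ℝ) → ℝ) where
  carrier := {p | IsPolyFun k p ∧ IsHomOfDeg k d p ∧ IsHarm k p ∧ IsOInvariant k p}
  zero_mem' := by
    refine ⟨⟨0, by simp⟩, fun c hc x => by simp, fun x => ?_, fun g x' t => rfl⟩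
    have h2 : ∀ v : EuclideanSpace ℝ (Fin k) × ℝ,
        secondDeriv (0 : (EuclideanSpace ℝ (Fin k) × ℝ) → ℝ) v x = 0 := by
      intro v
      have h0 : (fun y : EuclideanSpace ℝ (Fin k) × ℝ =>
          fderiv ℝ (0 : (EuclideanSpace ℝ (Fin k) × ℝ) → ℝ) y v) = fun _ => 0 := by
        funext y
        have hz : (0 : (EuclideanSpace ℝ (Fin k) × ℝ) → ℝ) = fun _ => (0 : ℝ) := rfl
        rw [hz, fderiv_fun_const]
        simp
      unfold secondDeriv
      rw [h0]
      simp
    simp [laplacianProd, h2]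
  add_mem' := by
    rintro p q ⟨hPp, hpH, hpL, hpG⟩ ⟨hPq, hqH, hqL, hqG⟩
    have hcp := hPp.contDiff2
    have hcq := hPq.contDiff2
    obtain ⟨P, hP⟩ := hPp
    obtain ⟨Q, hQ⟩ := hPq
    refine ⟨⟨P + Q, fun x => by simp [Pi.add_apply, hP x, hQ x]⟩, fun c hc x => ?_,
      fun x => ?_, fun g x' t => ?_⟩
    · simp only [Pi.add_apply, hpH c hc x, hqH c hc x]; ring
    · have h1 := hpL x
      have h2 := hqL x
      simp only [laplacianProd, secondDeriv_add hcp hcq] at h1 h2 ⊢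
      rw [Finset.sum_add_distrib]
      linarith
    · simp only [Pi.add_apply, hpG g x' t, hqG g x' t]
  smul_mem' := by
    rintro a p ⟨hPp, hpH, hpL, hpG⟩
    have hcp := hPp.contDiff2
    obtain ⟨P, hP⟩ := hPp
    refine ⟨⟨MvPolynomial.C a * P, fun x => by
        simp [Pi.smul_apply, smul_eq_mul, hP x]⟩, fun c hc x => ?_,
      fun x => ?_, fun g x' t => ?_⟩
    · simp only [Pi.smul_apply, smul_eq_mul, hpH c hc x]; ring
    · have h1 := hpL x
      simp only [laplacianProd, secondDeriv_smul hcp a] at h1 ⊢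
      rw [← Finset.mul_sum]
      linear_combination a * h1
    · simp only [Pi.smul_apply, smul_eq_mul, hpG g x' t]


noncomputable section

lemma HasFDerivAt.pow'' {E : Type*} [NormedAddCommGroup E] [NormedSpace ℝ E]
    {f : E → ℝ} {f' : E →L[ℝ] ℝ} {x : E} (h : HasFDerivAt f f' x) (n : ℕ) :
    HasFDerivAt (fun y => f y ^ n) (((n : ℝ) * f x ^ (n - 1)) • f') x := by
  induction n with
  | zero => simpa using hasFDerivAt_const (1:ℝ) x
  | succ k ih =>
    rcases Nat.eq_zero_or_pos k with hk | hk
    · subst hk; simpa using h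
    · have h2 : HasFDerivAt (fun y => f y ^ k * f y)
        (f x ^ k • f' + f x • (((k : ℝ) * f x ^ (k - 1)) • f')) x := ih.mul h
      have hfun : (fun y => f y ^ (k+1)) = fun y => f y ^ k * f y := by
        funext y; rw [pow_succ]
      rw [hfun]
      convert h2 using 1
      ext v
      obtain ⟨k, rfl⟩ := Nat.exists_eq_succ_of_ne_zero hk.ne'
      simp only [ContinuousLinearMap.add_apply, ContinuousLinearMap.smul_apply, smul_eq_mul]
      push_cast
      ring_nf
      rw [pow_succ]
      ring

variable {m : ℕ}

abbrev ES (m : ℕ) := EuclideanSpace ℝ (Fin m)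

def QF (m : ℕ) (x : ES m × ℝ) : ℝ := ∑ i, x.1 i ^ 2

def cpl (m : ℕ) (i : Fin m) : (ES m × ℝ) →L[ℝ] ℝ :=
  (EuclideanSpace.proj i).comp (ContinuousLinearMap.fst ℝ (ES m) ℝ)

def sndL (m : ℕ) : (ES m × ℝ) →L[ℝ] ℝ := ContinuousLinearMap.snd ℝ (ES m) ℝ

def QD (m : ℕ) (x : ES m × ℝ) : (ES m × ℝ) →L[ℝ] ℝ := ∑ i, (2 * x.1 i) • cpl m i

lemma cpl_apply (i : Fin m) (v : ES m × ℝ) : cpl m i v = v.1 i := rfl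
lemma sndL_apply (v : ES m × ℝ) : sndL m v = v.2 := rfl

lemma QD_apply (x v : ES m × ℝ) : QD m x v = ∑ i, 2 * x.1 i * v.1 i := by
  simp [QD, cpl_apply, mul_assoc]

lemma hasFDerivAt_QF (x : ES m × ℝ) : HasFDerivAt (QF m) (QD m x) x := by
  have : ∀ i : Fin m, HasFDerivAt (fun y : ES m × ℝ => y.1 i ^ 2)
      ((2 * x.1 i) • cpl m i) x := by
    intro i
    have h := (cpl m i).hasFDerivAt (x := x)
    have h2 := h.pow'' 2
    simpa [cpl_apply] using h2
  have hs := HasFDerivAt.fun_sum (fun i (_ : i ∈ Finset.univ) => this i)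
  exact hs

def bF (m : ℕ) (j n : ℕ) (x : ES m × ℝ) : ℝ := QF m x ^ j * x.2 ^ n

def bD (m : ℕ) (j n : ℕ) (x : ES m × ℝ) : (ES m × ℝ) →L[ℝ] ℝ :=
  QF m x ^ j • (((n : ℝ) * x.2 ^ (n - 1)) • sndL m) +
    x.2 ^ n • (((j : ℝ) * QF m x ^ (j - 1)) • QD m x)

lemma hasFDerivAt_bF (j n : ℕ) (x : ES m × ℝ) :
    HasFDerivAt (bF m j n) (bD m j n x) x := by
  have h1 : HasFDerivAt (fun y : ES m × ℝ => QF m y ^ j)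
      (((j : ℝ) * QF m x ^ (j - 1)) • QD m x) x := (hasFDerivAt_QF x).pow'' j
  have h2 : HasFDerivAt (fun y : ES m × ℝ => y.2 ^ n)
      (((n : ℝ) * x.2 ^ (n - 1)) • sndL m) x := by
    have := ((ContinuousLinearMap.snd ℝ (ES m) ℝ).hasFDerivAt (x := x)).pow'' n
    simpa [sndL] using this
  exact h1.mul h2

lemma fderiv_bF_apply (j n : ℕ) (y v : ES m × ℝ) :
    fderiv ℝ (bF m j n) y v =
      QF m y ^ j * ((n : ℝ) * y.2 ^ (n - 1) * v.2) +
        y.2 ^ n * ((j : ℝ) * QF m y ^ (j - 1) * QD m y v) := by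
  rw [(hasFDerivAt_bF j n y).fderiv]
  simp only [bD, ContinuousLinearMap.add_apply, ContinuousLinearMap.smul_apply,
    smul_eq_mul, sndL_apply]

lemma contDiff_QF : ContDiff ℝ 2 (QF m) := by
  have : ∀ i : Fin m, ContDiff ℝ 2 (fun x : ES m × ℝ => x.1 i ^ 2) := fun i =>
    ((cpl m i).contDiff).pow 2
  exact ContDiff.sum fun i _ => this i

lemma contDiff_bF (j n : ℕ) : ContDiff ℝ 2 (bF m j n) :=
  (contDiff_QF.pow j).mul (((ContinuousLinearMap.snd ℝ (ES m) ℝ).contDiff).pow n)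

lemma QD_single (y : ES m × ℝ) (i : Fin m) :
    QD m y (EuclideanSpace.single i (1:ℝ), (0:ℝ)) = 2 * y.1 i := by
  rw [QD_apply]
  have : ∀ i' : Fin m,
      2 * y.1 i' * (EuclideanSpace.single i (1:ℝ), (0:ℝ)).1 i'
        = if i' = i then 2 * y.1 i' else 0 := by
    intro i'
    simp [EuclideanSpace.single_apply]
  rw [Finset.sum_congr rfl fun i' _ => this i']
  simp

lemma fderiv_bF_xi (j n : ℕ) (i : Fin m) (y : ES m × ℝ) :
    fderiv ℝ (bF m j n) y (EuclideanSpace.single i (1:ℝ), (0:ℝ)) =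
      (2 * (j:ℝ)) * (QF m y ^ (j-1) * (y.1 i * y.2 ^ n)) := by
  rw [fderiv_bF_apply, QD_single]
  ring

lemma secondDeriv_bF_xi (j n : ℕ) (i : Fin m) (x : ES m × ℝ) :
    secondDeriv (bF m j n) (EuclideanSpace.single i (1:ℝ), (0:ℝ)) x =
      2 * (j:ℝ) * (((j-1:ℕ):ℝ) * QF m x ^ (j-1-1) * (2 * x.1 i ^ 2) * x.2 ^ n
        + QF m x ^ (j-1) * x.2 ^ n) := by
  unfold secondDeriv
  have hfun : (fun y : ES m × ℝ => fderiv ℝ (bF m j n) y (EuclideanSpace.single i (1:ℝ), (0:ℝ)))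
      = fun y => (2 * (j:ℝ)) * (QF m y ^ (j-1) * (y.1 i * y.2 ^ n)) := by
    funext y; exact fderiv_bF_xi j n i y
  rw [hfun]
  have hA : HasFDerivAt (fun y : ES m × ℝ => QF m y ^ (j-1))
      ((((j-1:ℕ):ℝ) * QF m x ^ (j-1-1)) • QD m x) x := (hasFDerivAt_QF x).pow'' (j-1)
  have hB : HasFDerivAt (fun y : ES m × ℝ => y.1 i) (cpl m i) x := (cpl m i).hasFDerivAt
  have hC : HasFDerivAt (fun y : ES m × ℝ => y.2 ^ n)
      (((n : ℝ) * x.2 ^ (n - 1)) • sndL m) x := by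
    have := ((ContinuousLinearMap.snd ℝ (ES m) ℝ).hasFDerivAt (x := x)).pow'' n
    simpa [sndL] using this
  have hG := ((hA.fun_mul (hB.fun_mul hC)).const_mul (2 * (j:ℝ)))
  rw [hG.fderiv]
  simp only [ContinuousLinearMap.smul_apply, ContinuousLinearMap.add_apply, smul_eq_mul,
    cpl_apply, sndL_apply, QD_single, EuclideanSpace.single_apply, if_pos]
  ring

lemma sum_secondDeriv_bF (j n : ℕ) (x : ES m × ℝ) :
    ∑ i, secondDeriv (bF m j n) (EuclideanSpace.single i (1:ℝ), (0:ℝ)) x =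
      (2 * (j:ℝ) * (2 * (j:ℝ) + (m:ℝ) - 2)) * QF m x ^ (j-1) * x.2 ^ n := by
  rw [Finset.sum_congr rfl fun i _ => secondDeriv_bF_xi j n i x]
  match j with
  | 0 => simp
  | 1 => simp [Finset.sum_const, Finset.card_univ]; ring
  | (jj+2) =>
    have hsplit : ∀ i : Fin m,
        2 * ((jj+2:ℕ):ℝ) * (((jj+2-1:ℕ):ℝ) * QF m x ^ (jj+2-1-1) * (2 * x.1 i ^ 2) * x.2 ^ n
          + QF m x ^ (jj+2-1) * x.2 ^ n)
        = (4 * ((jj+2:ℕ):ℝ) * ((jj+1:ℕ):ℝ) * QF m x ^ jj * x.2 ^ n) * x.1 i ^ 2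
          + 2 * ((jj+2:ℕ):ℝ) * QF m x ^ (jj+1) * x.2 ^ n := by
      intro i
      push_cast
      ring
    rw [Finset.sum_congr rfl fun i _ => hsplit i]
    rw [Finset.sum_add_distrib, ← Finset.mul_sum, Finset.sum_const, Finset.card_univ]
    have hQ : ∑ i, x.1 i ^ 2 = QF m x := rfl
    rw [hQ]
    simp only [Fintype.card_fin, nsmul_eq_mul]
    push_cast
    ring

lemma fderiv_bF_t (j n : ℕ) (y : ES m × ℝ) :
    fderiv ℝ (bF m j n) y ((0 : ES m), (1:ℝ)) = (n:ℝ) * (QF m y ^ j * y.2 ^ (n-1)) := by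
  rw [fderiv_bF_apply]
  have : QD m y ((0 : ES m), (1:ℝ)) = 0 := by
    rw [QD_apply]
    simp
  rw [this]
  ring

lemma secondDeriv_bF_t (j n : ℕ) (x : ES m × ℝ) :
    secondDeriv (bF m j n) ((0 : ES m), (1:ℝ)) x =
      (n:ℝ) * ((n-1:ℕ):ℝ) * QF m x ^ j * x.2 ^ (n-1-1) := by
  unfold secondDeriv
  have hfun : (fun y : ES m × ℝ => fderiv ℝ (bF m j n) y ((0 : ES m), (1:ℝ)))
      = fun y => (n:ℝ) * (QF m y ^ j * y.2 ^ (n-1)) := by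
    funext y; exact fderiv_bF_t j n y
  rw [hfun]
  have hA : HasFDerivAt (fun y : ES m × ℝ => QF m y ^ j)
      (((j:ℝ) * QF m x ^ (j-1)) • QD m x) x := (hasFDerivAt_QF x).pow'' j
  have hC : HasFDerivAt (fun y : ES m × ℝ => y.2 ^ (n-1))
      ((((n-1:ℕ) : ℝ) * x.2 ^ (n-1-1)) • sndL m) x := by
    have := ((ContinuousLinearMap.snd ℝ (ES m) ℝ).hasFDerivAt (x := x)).pow'' (n-1)
    simpa [sndL] using this
  have hG := ((hA.fun_mul hC).const_mul ((n:ℝ)))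
  rw [hG.fderiv]
  have h0 : QD m x ((0 : ES m), (1:ℝ)) = 0 := by
    rw [QD_apply]; simp
  simp only [ContinuousLinearMap.smul_apply, ContinuousLinearMap.add_apply, smul_eq_mul,
    sndL_apply, h0]
  ring

lemma secondDeriv_const_mul {p : ES m × ℝ → ℝ} (hp : ContDiff ℝ 2 p) (a : ℝ)
    (v x : ES m × ℝ) :
    secondDeriv (fun y => a * p y) v x = a * secondDeriv p v x := by
  have h : (fun y => a * p y) = a • p := by funext y; simp
  rw [h, secondDeriv_smul hp]

lemma secondDeriv_finset_sum {ι : Type*} (s : Finset ι) (f : ι → (ES m × ℝ) → ℝ)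
    (h : ∀ i ∈ s, ContDiff ℝ 2 (f i)) (v x : ES m × ℝ) :
    secondDeriv (fun y => ∑ i ∈ s, f i y) v x = ∑ i ∈ s, secondDeriv (f i) v x := by
  classical
  induction s using Finset.induction with
  | empty =>
    have h0 : (fun y : ES m × ℝ => fderiv ℝ (fun _ : ES m × ℝ => (0:ℝ)) y v) = fun _ => 0 := by
      funext y; simp
    simp only [Finset.sum_empty]
    unfold secondDeriv
    rw [h0]
    simp
  | @insert a s hni ih =>
    have hsum : (fun y => ∑ i ∈ insert a s, f i y)
        = (f a + fun y => ∑ i ∈ s, f i y) := by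
      funext y; rw [Finset.sum_insert hni]; rfl
    have hca : ContDiff ℝ 2 (f a) := h a (Finset.mem_insert_self a s)
    have hcs : ContDiff ℝ 2 (fun y => ∑ i ∈ s, f i y) :=
      ContDiff.sum fun i hi => h i (Finset.mem_insert_of_mem hi)
    rw [hsum, secondDeriv_add hca hcs, Finset.sum_insert hni,
      ih fun i hi => h i (Finset.mem_insert_of_mem hi)]

def pZ (m k : ℕ) (a : ℕ → ℝ) (x : ES m × ℝ) : ℝ :=
  ∑ j ∈ Finset.range (k/2 + 1), a j * bF m j (k - 2*j) x

def Rc (m k : ℕ) (a : ℕ → ℝ) (l : ℕ) : ℝ :=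
  (2*((l:ℝ)+1)*(2*((l:ℝ)+1)+(m:ℝ)-2)) * a (l+1)
    + ((k-2*l:ℕ):ℝ) * ((k-2*l-1:ℕ):ℝ) * a l

lemma secondDeriv_pZ (k : ℕ) (a : ℕ → ℝ) (v x : ES m × ℝ) :
    secondDeriv (pZ m k a) v x
      = ∑ j ∈ Finset.range (k/2 + 1), a j * secondDeriv (bF m j (k - 2*j)) v x := by
  have h : pZ m k a = fun y => ∑ j ∈ Finset.range (k/2+1),
      (fun z => a j * bF m j (k - 2*j) z) y := rfl
  rw [h, secondDeriv_finset_sum _ _ (fun j _ => contDiff_const.mul (contDiff_bF j (k-2*j)))]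
  exact Finset.sum_congr rfl fun j _ => secondDeriv_const_mul (contDiff_bF j (k-2*j)) _ v x

lemma laplacian_pZ (k : ℕ) (a : ℕ → ℝ) (x : ES m × ℝ) :
    laplacianProd m (pZ m k a) x
      = ∑ l ∈ Finset.range (k/2), Rc m k a l * QF m x ^ l * x.2 ^ (k - 2*l - 2) := by
  set J := k/2 with hJ
  set A : ℕ → ℝ := fun j =>
    (2*(j:ℝ)*(2*(j:ℝ)+(m:ℝ)-2)) * QF m x ^ (j-1) * x.2 ^ (k - 2*j) with hA
  set B : ℕ → ℝ := fun j =>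
    ((k-2*j:ℕ):ℝ) * ((k-2*j-1:ℕ):ℝ) * QF m x ^ j * x.2 ^ (k-2*j-1-1) with hB
  have hlap : laplacianProd m (pZ m k a) x
      = ∑ j ∈ Finset.range (J+1), (a j * A j + a j * B j) := by
    unfold laplacianProd
    have h1 : ∀ i : Fin m, secondDeriv (pZ m k a) (EuclideanSpace.single i 1, 0) x
        = ∑ j ∈ Finset.range (J+1), a j * secondDeriv (bF m j (k-2*j))
            (EuclideanSpace.single i 1, 0) x := fun i => secondDeriv_pZ k a _ x
    have h2 := secondDeriv_pZ k a ((0 : ES m), (1:ℝ)) x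
    rw [Finset.sum_congr rfl fun i _ => h1 i, h2, Finset.sum_comm]
    rw [← Finset.sum_add_distrib]
    refine Finset.sum_congr rfl fun j _ => ?_
    rw [← Finset.mul_sum, ← mul_add, sum_secondDeriv_bF, secondDeriv_bF_t]
    rw [hA, hB]
    ring
  rw [hlap, Finset.sum_add_distrib, Finset.sum_range_succ', Finset.sum_range_succ]
  have hA0 : A 0 = 0 := by simp [hA]
  have hBJ : B J = 0 := by
    have h : (k - 2*(k/2) = 0) ∨ (k - 2*(k/2) - 1 = 0) := by omega
    rcases h with h | h <;> simp [hB, hJ, h]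
  rw [hA0, hBJ]
  simp only [mul_zero, add_zero]
  rw [← Finset.sum_add_distrib]
  refine Finset.sum_congr rfl fun l hl => ?_
  have hl' : l < J := Finset.mem_range.mp hl
  have e1 : k - 2*(l+1) = k - 2*l - 2 := by omega
  have e2 : k - 2*l - 1 - 1 = k - 2*l - 2 := by omega
  rw [hA, hB]
  simp only [Nat.add_sub_cancel, e1, e2]
  rw [Rc]
  push_cast
  ring

lemma QF_smul_single (hm : 1 ≤ m) (s t : ℝ) :
    QF m ((s • EuclideanSpace.single (⟨0, hm⟩ : Fin m) (1:ℝ)), t) = s^2 := by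
  unfold QF
  have h : ∀ i : Fin m, ((s • EuclideanSpace.single (⟨0, hm⟩ : Fin m) (1:ℝ),
      t).1 i) ^ 2 = if i = (⟨0, hm⟩ : Fin m) then s^2 else 0 := by
    intro i
    have h1 : ((s • EuclideanSpace.single (⟨0, hm⟩ : Fin m) (1:ℝ), t)).1 i
        = s * (EuclideanSpace.single (⟨0, hm⟩ : Fin m) (1:ℝ)) i := rfl
    rw [h1, EuclideanSpace.single_apply]
    by_cases hi : i = (⟨0, hm⟩ : Fin m) <;> simp [hi] <;> ring
  rw [Finset.sum_congr rfl fun i _ => h i]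
  simp

lemma vanish_of_forall (hm : 1 ≤ m) (J : ℕ) (c : ℕ → ℝ) (e : ℕ → ℕ)
    (h : ∀ x : ES m × ℝ, ∑ l ∈ Finset.range J, c l * QF m x ^ l * x.2 ^ (e l) = 0) :
    ∀ l < J, c l = 0 := by
  set q : Polynomial ℝ := ∑ l ∈ Finset.range J, Polynomial.C (c l) * Polynomial.X ^ (2*l)
    with hqdef
  have heval : ∀ s : ℝ, q.eval s = 0 := by
    intro s
    have hx := h ((s • EuclideanSpace.single (⟨0, hm⟩ : Fin m) (1:ℝ)), (1:ℝ))
    rw [QF_smul_single hm] at hx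
    rw [hqdef]
    rw [Polynomial.eval_finset_sum]
    rw [← hx]
    refine Finset.sum_congr rfl fun l _ => ?_
    simp [pow_mul]
  have hq0 : q = 0 := Polynomial.funext fun s => by rw [heval]; simp
  intro l hl
  have hc := congrArg (fun p : Polynomial ℝ => p.coeff (2*l)) hq0
  simp only [hqdef, Polynomial.finset_sum_coeff, Polynomial.coeff_C_mul,
    Polynomial.coeff_X_pow, Polynomial.coeff_zero] at hc
  have hrw : ∀ l' : ℕ, (c l' * if 2*l = 2*l' then (1:ℝ) else 0)
      = if l' = l then c l' else 0 := by
    intro l'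
    by_cases hll : l' = l
    · simp [hll]
    · have : ¬ (2*l = 2*l') := by omega
      simp [hll, this]
  rw [Finset.sum_congr rfl fun l' _ => hrw l'] at hc
  rw [Finset.sum_ite_eq' _ _ _] at hc
  simpa [Finset.mem_range.mpr hl] using hc

noncomputable def astar (m k : ℕ) : ℕ → ℝ
  | 0 => 1
  | (l+1) => -(((k-2*l:ℕ):ℝ) * ((k-2*l-1:ℕ):ℝ))
      / (2*((l:ℝ)+1)*(2*((l:ℝ)+1)+(m:ℝ)-2)) * astar m k l

lemma denom_ne (hm : 1 ≤ m) (l : ℕ) :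
    (2*((l:ℝ)+1)*(2*((l:ℝ)+1)+(m:ℝ)-2)) ≠ 0 := by
  have h1 : (1:ℝ) ≤ m := by exact_mod_cast hm
  have h0 : (0:ℝ) ≤ l := Nat.cast_nonneg l
  nlinarith

lemma Rc_astar (hm : 1 ≤ m) (k l : ℕ) : Rc m k (astar m k) l = 0 := by
  rw [Rc]
  have hstep : astar m k (l+1) = -(((k-2*l:ℕ):ℝ) * ((k-2*l-1:ℕ):ℝ))
      / (2*((l:ℝ)+1)*(2*((l:ℝ)+1)+(m:ℝ)-2)) * astar m k l := rfl
  rw [hstep]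
  rw [div_mul_eq_mul_div, mul_div_assoc', mul_div_cancel_left₀ _ (denom_ne hm l)]
  ring

lemma QF_eq_norm (x : ES m × ℝ) : QF m x = ‖x.1‖^2 := by
  have h : ‖x.1‖^2 = ∑ i, ‖x.1 i‖^2 := by
    rw [EuclideanSpace.norm_eq, Real.sq_sqrt (by positivity)]
  rw [h]
  unfold QF
  exact Finset.sum_congr rfl fun i _ => by rw [Real.norm_eq_abs, sq_abs]

lemma QF_smul (c : ℝ) (x : ES m × ℝ) : QF m (c • x) = c^2 * QF m x := by
  unfold QF
  rw [Finset.mul_sum]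
  refine Finset.sum_congr rfl fun i _ => ?_
  have h : (c • x).1 i = c * x.1 i := rfl
  rw [h]
  ring

lemma pZ_mem (hm : 1 ≤ m) (k : ℕ) (a : ℕ → ℝ) (hR : ∀ l, Rc m k a l = 0) :
    pZ m k a ∈ zonalSpace m k := by
  refine ⟨?_, ?_, ?_, ?_⟩
  · -- IsPolyFun
    refine ⟨∑ j ∈ Finset.range (k/2 + 1), MvPolynomial.C (a j)
      * (∑ i : Fin m, (MvPolynomial.X (Sum.inl i))^2)^j
      * (MvPolynomial.X (Sum.inr 0))^(k - 2*j), fun x => ?_⟩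
    rw [map_sum]
    refine Finset.sum_congr rfl fun j _ => ?_
    simp only [MvPolynomial.eval_mul, MvPolynomial.eval_pow, MvPolynomial.eval_C,
      MvPolynomial.eval_X, map_sum, Sum.elim_inl, Sum.elim_inr]
    rw [bF, QF]
    ring
  · -- IsHomOfDeg
    intro c hc x
    unfold pZ
    rw [Finset.mul_sum]
    refine Finset.sum_congr rfl fun j hj => ?_
    have hj' : j < k/2 + 1 := Finset.mem_range.mp hj
    have hk : 2*j + (k - 2*j) = k := by omega
    rw [bF, bF, QF_smul]
    have h2 : (c • x).2 = c * x.2 := rfl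
    rw [h2, mul_pow, mul_pow, ← pow_mul]
    have hck : c ^ (2*j) * c ^ (k - 2*j) = c ^ k := by rw [← pow_add, hk]
    calc a j * (c ^ (2 * j) * QF m x ^ j * (c ^ (k - 2 * j) * x.2 ^ (k - 2 * j)))
        = (c ^ (2*j) * c ^ (k - 2*j)) * (a j * (QF m x ^ j * x.2 ^ (k - 2*j))) := by ring
      _ = c ^ k * (a j * (QF m x ^ j * x.2 ^ (k - 2 * j))) := by rw [hck]
  · -- IsHarm
    intro x
    rw [laplacian_pZ]
    simp [hR]
  · -- IsOInvariant
    intro g x' t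
    unfold pZ
    refine Finset.sum_congr rfl fun j _ => ?_
    rw [bF, bF]
    have hq : QF m (g x', t) = QF m (x', t) := by
      rw [QF_eq_norm, QF_eq_norm]
      simp [g.norm_map]
    rw [hq]

lemma pZ_at_01 (k : ℕ) (a : ℕ → ℝ) : pZ m k a ((0 : ES m), (1:ℝ)) = a 0 := by
  have hq : QF m ((0 : ES m), (1:ℝ)) = 0 := by
    unfold QF
    refine Finset.sum_eq_zero fun i _ => ?_
    have h : ((0 : ES m), (1:ℝ)).1 i = 0 := rfl
    rw [h]
    ring
  unfold pZ
  rw [Finset.sum_eq_single 0]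
  · rw [bF, hq]
    simp
  · intro j _ hj0
    rw [bF, hq]
    simp [zero_pow hj0]
  · intro h
    exact absurd (Finset.mem_range.mpr (Nat.succ_pos _)) h

open MvPolynomial in
lemma eval_bind₁' {σ : Type*} (v : Fin 2 → ℝ) (g : σ → MvPolynomial (Fin 2) ℝ)
    (Q : MvPolynomial σ ℝ) :
    eval v (bind₁ g Q) = eval (fun i => eval v (g i)) Q := by
  have h := eval₂Hom_bind₁ (RingHom.id ℝ) v g Q
  exact h

open MvPolynomial in
lemma coeff_bind_diag (r : Fin 2 → ℝ) (Q : MvPolynomial (Fin 2) ℝ) (d : Fin 2 →₀ ℕ) :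
    coeff d (bind₁ (fun i => C (r i) * X i) Q) = (∏ i, r i ^ d i) * coeff d Q := by
  classical
  have key : ∀ (d' : Fin 2 →₀ ℕ) (a : ℝ),
      bind₁ (fun i => C (r i) * X i) (monomial d' a)
        = monomial d' ((∏ i, r i ^ d' i) * a) := by
    intro d' a
    rw [← aeval_eq_bind₁, aeval_monomial]
    have h1 : (d'.prod fun i e => (C (r i) * X i) ^ e)
        = C (∏ i, r i ^ d' i) * (d'.prod fun i e => (X i : MvPolynomial (Fin 2) ℝ) ^ e) := by
      rw [Finsupp.prod_fintype _ _ (fun i => pow_zero _),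
        Finsupp.prod_fintype _ _ (fun i => pow_zero _)]
      have h2 : ∀ i : Fin 2, (C (r i) * X i : MvPolynomial (Fin 2) ℝ) ^ d' i
          = C (r i ^ d' i) * (X i) ^ d' i := by
        intro i; rw [mul_pow, ← map_pow]
      rw [Finset.prod_congr rfl fun i _ => h2 i, Finset.prod_mul_distrib, ← map_prod]
    rw [h1, monomial_eq]
    have : (algebraMap ℝ (MvPolynomial (Fin 2) ℝ)) a = C a := rfl
    rw [this, ← mul_assoc, ← map_mul, mul_comm a]
  conv_lhs => rw [Q.as_sum, map_sum, Finset.sum_congr rfl fun d' _ => key d' _]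
  rw [coeff_sum]
  simp only [coeff_monomial]
  rw [Finset.sum_ite_eq' Q.support d (fun d' => (∏ i, r i ^ d' i) * coeff d' Q)]
  by_cases hd : d ∈ Q.support
  · rw [if_pos hd]
  · rw [if_neg hd, notMem_support_iff.mp hd, mul_zero]

lemma exists_isometry_map (x y : ES m) (h : ‖x‖ = ‖y‖) :
    ∃ g : ES m ≃ₗᵢ[ℝ] ES m, g x = y := by
  by_cases hxy : x = y
  · exact ⟨LinearIsometryEquiv.refl ℝ (ES m), by rw [hxy]; rfl⟩
  · exact ⟨Submodule.reflection (ℝ ∙ (x - y))ᗮ, Submodule.reflection_sub h⟩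

open MvPolynomial in
lemma rep_of_mem (hm : 1 ≤ m) {k : ℕ} {p : ES m × ℝ → ℝ}
    (hPp : IsPolyFun m p) (hpH : IsHomOfDeg m k p) (hpG : IsOInvariant m p) :
    ∃ a : ℕ → ℝ, ∀ x, p x = pZ m k a x := by
  classical
  obtain ⟨P, hP⟩ := hPp
  set i0 : Fin m := ⟨0, hm⟩ with hi0
  set E1 : ES m := EuclideanSpace.single i0 (1:ℝ) with hE1
  set sub : (Fin m ⊕ Fin 1) → MvPolynomial (Fin 2) ℝ :=
    Sum.elim (fun i => if i = i0 then X 0 else 0) (fun _ => X 1) with hsub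
  set P₂ : MvPolynomial (Fin 2) ℝ := bind₁ sub P with hP₂
  have hvext : ∀ v : Fin 2 → ℝ, ![v 0, v 1] = v := by
    intro v; funext i; fin_cases i <;> rfl
  have hφ : ∀ s t : ℝ, eval ![s, t] P₂ = p (s • E1, t) := by
    intro s t
    rw [hP₂, eval_bind₁', hP (s • E1, t)]
    have harg : (fun i => eval ![s, t] (sub i))
        = (Sum.elim (fun i => (s • E1, t).1 i) fun _ => (s • E1, t).2) := by
      funext idx
      cases idx with
      | inl i =>
        have hsm : (s • E1, t).1 i = s * E1 i := rfl
        rw [Sum.elim_inl, hsub, Sum.elim_inl, hsm, hE1, EuclideanSpace.single_apply]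
        by_cases hi : i = i0 <;> simp [hi]
      | inr j =>
        rw [Sum.elim_inr, hsub, Sum.elim_inr]
        simp
    rw [harg]
  -- reduce to the half-line
  have hnd : ∀ (x' : ES m) (t : ℝ), p (x', t) = eval ![‖x'‖, t] P₂ := by
    intro x' t
    rw [hφ]
    have hn : ‖‖x'‖ • E1‖ = ‖x'‖ := by
      rw [norm_smul, hE1, EuclideanSpace.norm_single]
      simp [abs_of_nonneg (norm_nonneg x')]
    obtain ⟨g, hg⟩ := exists_isometry_map (‖x'‖ • E1) x' (by rw [hn])
    conv_lhs => rw [← hg]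
    exact hpG g _ t
  -- evenness in the first variable
  have hodd : ∀ d : Fin 2 →₀ ℕ, Odd (d 0) → coeff d P₂ = 0 := by
    have hpoly : bind₁ (fun i => C (![(-1:ℝ),1] i) * X i) P₂ = P₂ := by
      apply MvPolynomial.funext
      intro v
      rw [eval_bind₁']
      have harg : (fun i => eval v (C (![(-1:ℝ),1] i) * X i)) = ![-(v 0), v 1] := by
        funext i; fin_cases i <;> simp
      rw [harg, hφ]
      conv_rhs => rw [← hvext v, hφ]
      have hneq : ‖(v 0) • E1‖ = ‖(-(v 0)) • E1‖ := by
        rw [norm_smul, norm_smul, norm_neg]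
      obtain ⟨g, hg⟩ := exists_isometry_map ((v 0) • E1) ((-(v 0)) • E1) hneq
      rw [← hg, hpG g]
    intro d hd
    have hc := congrArg (coeff d) hpoly
    rw [coeff_bind_diag] at hc
    rw [Fin.prod_univ_two] at hc
    simp only [Matrix.cons_val_zero, Matrix.cons_val_one, Matrix.head_cons, one_pow,
      mul_one] at hc
    rw [hd.neg_one_pow] at hc
    linarith [hc]
  -- homogeneity of degree k
  have hdeg : ∀ d ∈ P₂.support, d 0 + d 1 = k := by
    have hpoly : bind₁ (fun i => C (2:ℝ) * X i) P₂ = C ((2:ℝ)^k) * P₂ := by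
      apply MvPolynomial.funext
      intro v
      rw [eval_bind₁']
      have harg : (fun i => eval v (C (2:ℝ) * X i)) = ![2 * v 0, 2 * v 1] := by
        funext i; fin_cases i <;> simp
      rw [harg, hφ]
      have hsm : ((2 * v 0) • E1, 2 * v 1) = (2:ℝ) • ((v 0) • E1, v 1) := by
        rw [Prod.smul_def, smul_smul]
        norm_num
      rw [hsm, hpH 2 (by norm_num) ((v 0) • E1, v 1)]
      rw [eval_mul, eval_C, ← hvext v, hφ]
      norm_num
    intro d hd
    have hc := congrArg (coeff d) hpoly
    rw [coeff_bind_diag, Fin.prod_univ_two, coeff_C_mul] at hc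
    have hne := mem_support_iff.mp hd
    have h2 : (2:ℝ) ^ (d 0) * 2 ^ (d 1) = 2 ^ k := by
      exact mul_right_cancel₀ hne hc
    rw [← pow_add] at h2
    have h3 : ((2 ^ (d 0 + d 1) : ℕ) : ℝ) = ((2 ^ k : ℕ) : ℝ) := by push_cast; exact h2
    exact Nat.pow_right_injective (le_refl 2) (Nat.cast_inj.mp h3)
  -- assemble coefficients
  set dd : ℕ → (Fin 2 →₀ ℕ) :=
    fun j => Finsupp.single 0 (2*j) + Finsupp.single 1 (k - 2*j) with hdd
  have hdd0 : ∀ j, dd j 0 = 2*j := by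
    intro j
    rw [hdd]
    simp [Finsupp.single_apply]
  have hdd1 : ∀ j, dd j 1 = k - 2*j := by
    intro j
    rw [hdd]
    simp [Finsupp.single_apply]
  refine ⟨fun j => coeff (dd j) P₂, fun x => ?_⟩
  obtain ⟨x', t⟩ := x
  rw [hnd x' t, eval_eq']
  have hsupp : P₂.support ⊆ (Finset.range (k/2+1)).image dd := by
    intro d hd
    have h1 : d 0 + d 1 = k := hdeg d hd
    have h2 : ¬ Odd (d 0) := fun ho => (mem_support_iff.mp hd) (hodd d ho)
    obtain ⟨j, hj⟩ : ∃ j, d 0 = 2*j := by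
      rcases Nat.even_or_odd (d 0) with he | ho
      · obtain ⟨r, hr⟩ := he; exact ⟨r, by omega⟩
      · exact absurd ho h2
    refine Finset.mem_image.mpr ⟨j, Finset.mem_range.mpr (by omega), ?_⟩
    apply Finsupp.ext
    intro i
    have hii : i = 0 ∨ i = 1 := by omega
    rcases hii with hii | hii <;> subst hii
    · rw [hdd0]; omega
    · rw [hdd1]; omega
  rw [Finset.sum_subset hsupp (fun d _ hd => by rw [notMem_support_iff.mp hd, zero_mul])]
  rw [Finset.sum_image (fun j1 _ j2 _ he => by
    have h0 : dd j1 0 = dd j2 0 := by rw [he]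
    rw [hdd0, hdd0] at h0
    omega)]
  unfold pZ
  refine Finset.sum_congr rfl fun j _ => ?_
  rw [Fin.prod_univ_two, hdd0, hdd1]
  simp only [Matrix.cons_val_zero, Matrix.cons_val_one, Matrix.head_cons]
  rw [bF]
  have hq : QF m (x', t) = ‖x'‖^2 := QF_eq_norm (x', t)
  rw [hq, ← pow_mul]


end

theorem statement19 (N k : ℕ) (hN : 2 ≤ N) :
    Module.finrank ℝ ↥(zonalSpace (N - 1) k) = 1 := by
  set m := N - 1 with hmdef
  have hm : 1 ≤ m := by omega
  set p₁ : ES m × ℝ → ℝ := pZ m k (astar m k) with hp₁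
  have hmem : p₁ ∈ zonalSpace m k := pZ_mem hm k _ (fun l => Rc_astar hm k l)
  have hp₁ne : p₁ ≠ 0 := by
    intro h
    have h1 : p₁ ((0 : ES m), (1:ℝ)) = astar m k 0 := pZ_at_01 k _
    rw [h] at h1
    have h2 : astar m k 0 = 1 := rfl
    rw [h2] at h1
    norm_num at h1
  have hspan : zonalSpace m k = Submodule.span ℝ {p₁} := by
    apply le_antisymm
    · intro p hp
      obtain ⟨hPp, hpH, hpL, hpG⟩ := hp
      obtain ⟨a, ha⟩ := rep_of_mem hm hPp hpH hpG
      have hharm : ∀ x, laplacianProd m (pZ m k a) x = 0 := by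
        intro x
        have hfun : pZ m k a = p := funext fun x => (ha x).symm
        rw [hfun]
        exact hpL x
      have hRc : ∀ l < k/2, Rc m k a l = 0 :=
        vanish_of_forall hm (k/2) (fun l => Rc m k a l) (fun l => k - 2*l - 2)
          (fun x => by rw [← laplacian_pZ]; exact hharm x)
      have hind : ∀ j, j ≤ k/2 → a j = a 0 * astar m k j := by
        intro j
        induction j with
        | zero =>
          intro _
          have h2 : astar m k 0 = 1 := rfl
          rw [h2, mul_one]
        | succ l ih =>
          intro hl
          have hl' : l < k/2 := by omega
          have h1 := hRc l hl'
          rw [Rc] at h1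
          have h2 : astar m k (l+1) = -(((k-2*l:ℕ):ℝ) * ((k-2*l-1:ℕ):ℝ))
              / (2*((l:ℝ)+1)*(2*((l:ℝ)+1)+(m:ℝ)-2)) * astar m k l := rfl
          have hal := ih (by omega)
          have key : a 0 * (-(((k-2*l:ℕ):ℝ) * ((k-2*l-1:ℕ):ℝ))
              / (2*((l:ℝ)+1)*(2*((l:ℝ)+1)+(m:ℝ)-2)) * astar m k l)
              = -(((k-2*l:ℕ):ℝ) * ((k-2*l-1:ℕ):ℝ))
              / (2*((l:ℝ)+1)*(2*((l:ℝ)+1)+(m:ℝ)-2)) * a l := by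
            rw [hal]; ring
          have hD := denom_ne hm l
          rw [h2, key, div_mul_eq_mul_div, eq_div_iff hD]
          linear_combination h1
      have hps : p = a 0 • p₁ := by
        funext x
        rw [ha x]
        have h3 : (a 0 • p₁) x = a 0 * p₁ x := rfl
        rw [h3, hp₁]
        unfold pZ
        rw [Finset.mul_sum]
        refine Finset.sum_congr rfl fun j hj => ?_
        have hj' : j < k/2 + 1 := Finset.mem_range.mp hj
        rw [hind j (by omega)]
        ring
      rw [hps]
      exact Submodule.smul_mem _ _ (Submodule.mem_span_singleton_self p₁)
    · rw [Submodule.span_le, Set.singleton_subset_iff]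
      exact hmem
  rw [hspan]
  exact finrank_span_singleton hp₁ne
end
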